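/- Let G be a finite group of minimal order not in class F, and let a be a divisor of |G| = n such that G has no factorization into subsets of sizes a and n/a. Then neither a nor n/a divides the order of any proper subgroup of G. -/

import Mathlib

def IsFactorization {G : Type*} [Group G] (A B : Finset G) : Prop :=
  ∀ g : G, ∃! p : G × G, p.1 ∈ A ∧ p.2 ∈ B ∧ p.1 * p.2 = g

def InF (G : Type*) [Group G] : Prop :=
  ∀ a b : ℕ, a * b = Nat.card G →
    ∃ A B : Finset G, A.card = a ∧ B.card = b ∧ IsFactorization A B

open Subgroup in
lemma extend_right {G : Type*} [Group G] [Fintype G] (H : Subgroup G) (T : Set G)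
    (hT : IsComplement (H : Set G) T) (A B : Finset H) (hfac : IsFactorization A B) :
    ∃ A' B' : Finset G, A'.card = A.card ∧ B'.card = B.card * Nat.card T ∧
      IsFactorization A' B' := by
  classical
  refine ⟨A.image H.subtype, (B ×ˢ T.toFinset).image (fun p => (p.1 : G) * p.2), ?_, ?_, ?_⟩
  · exact Finset.card_image_of_injective _ H.subtype_injective
  · rw [Finset.card_image_of_injOn, Finset.card_product, Set.toFinset_card,
      Nat.card_eq_fintype_card]
    rintro ⟨b1, t1⟩ h1 ⟨b2, t2⟩ h2 heq
    simp only [Finset.coe_product, Set.mem_prod, Finset.mem_coe, Set.mem_toFinset] at h1 h2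
    have := hT.1 (a₁ := (⟨(b1 : G), b1.2⟩, ⟨t1, h1.2⟩)) (a₂ := (⟨(b2 : G), b2.2⟩, ⟨t2, h2.2⟩))
      heq
    obtain ⟨h1', h2'⟩ := Prod.mk.injEq .. ▸ this
    exact Prod.ext (Subtype.ext (congrArg Subtype.val h1')) (congrArg Subtype.val h2')
  · intro g
    obtain ⟨⟨⟨h, hh⟩, ⟨t, ht⟩⟩, hx, huniq⟩ := hT.existsUnique g
    obtain ⟨⟨aa, bb⟩, ⟨haA, hbB, hab⟩, huniq2⟩ := hfac ⟨h, hh⟩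
    refine ⟨((aa : G), (bb : G) * t), ⟨?_, ?_, ?_⟩, ?_⟩
    · exact Finset.mem_image.mpr ⟨aa, haA, rfl⟩
    · exact Finset.mem_image.mpr ⟨(bb, t), by simpa [Finset.mem_product] using ⟨hbB, ht⟩, rfl⟩
    · have : ((aa : G) * bb) = h := congrArg Subtype.val hab
      rw [← mul_assoc, this]; exact hx
    · rintro ⟨x, y⟩ ⟨hxA, hyB, hxy⟩
      obtain ⟨a', ha', rfl⟩ := Finset.mem_image.mp hxA
      obtain ⟨⟨b', t'⟩, hbt', rfl⟩ := Finset.mem_image.mp hyB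
      simp only [Finset.mem_product, Set.mem_toFinset] at hbt'
      have hmem : ((a' : G) * (b' : G)) ∈ (H : Set G) := mul_mem a'.2 b'.2
      have := huniq (⟨(a' : G) * (b' : G), hmem⟩, ⟨t', hbt'.2⟩)
        (by simpa [mul_assoc] using hxy)
      obtain ⟨e1, e2⟩ := Prod.mk.injEq .. ▸ this
      have habH : a' * b' = (⟨h, hh⟩ : H) := Subtype.ext (congrArg Subtype.val e1)
      have := huniq2 (a', b') ⟨ha', hbt'.1, habH⟩
      obtain ⟨f1, f2⟩ := Prod.mk.injEq .. ▸ this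
      have ht' : t' = t := congrArg Subtype.val e2
      subst f1 f2
      simp [ht']

open Subgroup in
lemma extend_left {G : Type*} [Group G] [Fintype G] (H : Subgroup G) (T : Set G)
    (hT : IsComplement T (H : Set G)) (A B : Finset H) (hfac : IsFactorization A B) :
    ∃ A' B' : Finset G, A'.card = Nat.card T * A.card ∧ B'.card = B.card ∧
      IsFactorization A' B' := by
  classical
  refine ⟨(T.toFinset ×ˢ A).image (fun p => p.1 * (p.2 : G)), B.image H.subtype, ?_, ?_, ?_⟩
  · rw [Finset.card_image_of_injOn, Finset.card_product, Set.toFinset_card,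
      Nat.card_eq_fintype_card]
    rintro ⟨t1, a1⟩ h1 ⟨t2, a2⟩ h2 heq
    simp only [Finset.coe_product, Set.mem_prod, Finset.mem_coe, Set.mem_toFinset] at h1 h2
    have := hT.1 (a₁ := (⟨t1, h1.1⟩, ⟨(a1 : G), a1.2⟩)) (a₂ := (⟨t2, h2.1⟩, ⟨(a2 : G), a2.2⟩))
      heq
    obtain ⟨h1', h2'⟩ := Prod.mk.injEq .. ▸ this
    exact Prod.ext (congrArg Subtype.val h1') (Subtype.ext (congrArg Subtype.val h2'))
  · exact Finset.card_image_of_injective _ H.subtype_injective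
  · intro g
    obtain ⟨⟨⟨t, ht⟩, ⟨h, hh⟩⟩, hx, huniq⟩ := hT.existsUnique g
    obtain ⟨⟨aa, bb⟩, ⟨haA, hbB, hab⟩, huniq2⟩ := hfac ⟨h, hh⟩
    refine ⟨(t * (aa : G), (bb : G)), ⟨?_, ?_, ?_⟩, ?_⟩
    · exact Finset.mem_image.mpr ⟨(t, aa), by simpa [Finset.mem_product] using ⟨ht, haA⟩, rfl⟩
    · exact Finset.mem_image.mpr ⟨bb, hbB, rfl⟩
    · have : ((aa : G) * bb) = h := congrArg Subtype.val hab
      rw [mul_assoc, this]; exact hx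
    · rintro ⟨x, y⟩ ⟨hxA, hyB, hxy⟩
      obtain ⟨⟨t', a'⟩, hta', rfl⟩ := Finset.mem_image.mp hxA
      obtain ⟨b', hb', rfl⟩ := Finset.mem_image.mp hyB
      simp only [Finset.mem_product, Set.mem_toFinset] at hta'
      have hmem : ((a' : G) * (b' : G)) ∈ (H : Set G) := mul_mem a'.2 b'.2
      have := huniq (⟨t', hta'.1⟩, ⟨(a' : G) * (b' : G), hmem⟩)
        (by simpa [mul_assoc] using hxy)
      obtain ⟨e1, e2⟩ := Prod.mk.injEq .. ▸ this
      have habH : a' * b' = (⟨h, hh⟩ : H) := Subtype.ext (congrArg Subtype.val e2)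
      have := huniq2 (a', b') ⟨hta'.2, hb', habH⟩
      obtain ⟨f1, f2⟩ := Prod.mk.injEq .. ▸ this
      have ht' : t' = t := congrArg Subtype.val e1
      subst f1 f2
      simp [ht']

theorem minimal_counterexample_divisor (G : Type) [Group G] [Fintype G]
    (hG : ¬ InF G)
    (hmin : ∀ (H : Type) [Group H] [Fintype H],
      Nat.card H < Nat.card G → InF H)
    (a : ℕ) (ha : a ∣ Nat.card G)
    (hno : ¬ ∃ A B : Finset G, A.card = a ∧ B.card = Nat.card G / a ∧
      IsFactorization A B) :
    ∀ H : Subgroup G, H ≠ ⊤ →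
      ¬ a ∣ Nat.card H ∧ ¬ (Nat.card G / a) ∣ Nat.card H := by
  classical
  have hGpos : 0 < Nat.card G := Nat.card_pos
  have ha0 : a ≠ 0 := by rintro rfl; rw [Nat.zero_dvd] at ha; omega
  have hb0 : Nat.card G / a ≠ 0 := by
    have := Nat.mul_div_cancel' ha
    intro h; rw [h, mul_zero] at this; omega
  intro H hH
  have hcard : Nat.card H < Nat.card G := by
    refine lt_of_le_of_ne (Nat.le_of_dvd hGpos (Subgroup.card_subgroup_dvd_card H)) ?_
    intro h; exact hH (Subgroup.eq_top_of_card_eq H h)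
  have hF : InF H := hmin H hcard
  constructor
  · intro hdvd
    obtain ⟨T, hT, -⟩ := H.exists_isComplement_right 1
    obtain ⟨A, B, hA, hB, hfac⟩ := hF a (Nat.card H / a) (Nat.mul_div_cancel' hdvd)
    obtain ⟨A', B', hA', hB', hfac'⟩ := extend_right H T hT A B hfac
    refine hno ⟨A', B', by rw [hA', hA], ?_, hfac'⟩
    obtain ⟨c, hc⟩ := hdvd
    have hn : Nat.card H * Nat.card T = Nat.card G := hT.card_mul_card
    rw [hB', hB, hc, Nat.mul_div_cancel_left _ (Nat.pos_of_ne_zero ha0), ← hn, hc,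
      mul_assoc, Nat.mul_div_cancel_left _ (Nat.pos_of_ne_zero ha0)]
  · intro hdvd
    obtain ⟨T, hT, -⟩ := H.exists_isComplement_left 1
    obtain ⟨A, B, hA, hB, hfac⟩ := hF (Nat.card H / (Nat.card G / a)) (Nat.card G / a)
      (Nat.div_mul_cancel hdvd)
    obtain ⟨A', B', hA', hB', hfac'⟩ := extend_left H T hT A B hfac
    refine hno ⟨A', B', ?_, by rw [hB', hB], hfac'⟩
    obtain ⟨c, hc⟩ := hdvd
    have hn : Nat.card T * Nat.card H = Nat.card G := hT.card_mul_card
    have hab : a * (Nat.card G / a) = Nat.card G := Nat.mul_div_cancel' ha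
    rw [hA', hA, hc, Nat.mul_div_cancel_left _ (Nat.pos_of_ne_zero hb0)]
    have key : (Nat.card T * c) * (Nat.card G / a) = a * (Nat.card G / a) := by
      calc (Nat.card T * c) * (Nat.card G / a) = Nat.card T * (Nat.card G / a * c) := by ring
        _ = Nat.card T * Nat.card H := by rw [← hc]
        _ = Nat.card G := hn
        _ = a * (Nat.card G / a) := hab.symm
    exact Nat.eq_of_mul_eq_mul_right (Nat.pos_of_ne_zero hb0) key
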